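/- arXiv:2110.02499 — 4 statements merged into one kernel-verified Lean document; each statement's English description precedes it below -/
import Mathlib

section
/- For every bounded linear operator A on a complex Hilbert space, (1/4)‖A*A + AA*‖ + (1/4)c²(Re(A) + Im(A)) + (1/4)c²(Re(A) − Im(A)) ≤ w²(A). -/
open scoped InnerProductSpace
open ContinuousLinearMap

/-- The numerical radius of a bounded linear operator. -/
noncomputable def numRadius {H : Type*} [NormedAddCommGroup H] [InnerProductSpace ℂ H]
    (A : H →L[ℂ] H) : ℝ :=
  sSup {r : ℝ | ∃ x : H, ‖x‖ = 1 ∧ r = ‖⟪A x, x⟫_ℂ‖}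

/-- The Crawford number of a bounded linear operator. -/
noncomputable def crawford {H : Type*} [NormedAddCommGroup H] [InnerProductSpace ℂ H]
    (A : H →L[ℂ] H) : ℝ :=
  sInf {r : ℝ | ∃ x : H, ‖x‖ = 1 ∧ r = ‖⟪A x, x⟫_ℂ‖}

/-- The real part of a bounded linear operator. -/
noncomputable def reP {H : Type*} [NormedAddCommGroup H] [InnerProductSpace ℂ H]
    [CompleteSpace H] (A : H →L[ℂ] H) : H →L[ℂ] H :=
  ((2 : ℂ)⁻¹) • (A + adjoint A)

/-- The imaginary part of a bounded linear operator. -/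
noncomputable def imP {H : Type*} [NormedAddCommGroup H] [InnerProductSpace ℂ H]
    [CompleteSpace H] (A : H →L[ℂ] H) : H →L[ℂ] H :=
  ((2 * Complex.I)⁻¹) • (A - adjoint A)

section Aux

set_option linter.unusedSectionVars false
set_option linter.unnecessarySeqFocus false

variable {H : Type*} [NormedAddCommGroup H] [InnerProductSpace ℂ H]

lemma myS_bdd (A : H →L[ℂ] H) : BddAbove {r : ℝ | ∃ x : H, ‖x‖ = 1 ∧ r = ‖⟪A x, x⟫_ℂ‖} := by
  refine ⟨‖A‖, ?_⟩
  rintro r ⟨x, hx, rfl⟩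
  calc ‖⟪A x, x⟫_ℂ‖ ≤ ‖A x‖ * ‖x‖ := norm_inner_le_norm _ _
    _ ≤ ‖A‖ * ‖x‖ * ‖x‖ := by nlinarith [le_opNorm A x, norm_nonneg (A x), norm_nonneg x]
    _ = ‖A‖ := by rw [hx]; ring

lemma myS_bddBelow (A : H →L[ℂ] H) :
    BddBelow {r : ℝ | ∃ x : H, ‖x‖ = 1 ∧ r = ‖⟪A x, x⟫_ℂ‖} := by
  refine ⟨0, ?_⟩
  rintro r ⟨x, hx, rfl⟩
  exact norm_nonneg _

variable [Nontrivial H]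

lemma myS_ne (A : H →L[ℂ] H) : {r : ℝ | ∃ x : H, ‖x‖ = 1 ∧ r = ‖⟪A x, x⟫_ℂ‖}.Nonempty := by
  obtain ⟨x, hx⟩ := exists_norm_eq H (zero_le_one)
  exact ⟨_, x, hx, rfl⟩

lemma le_numRadius (A : H →L[ℂ] H) {x : H} (hx : ‖x‖ = 1) : ‖⟪A x, x⟫_ℂ‖ ≤ numRadius A :=
  le_csSup (myS_bdd A) ⟨x, hx, rfl⟩

lemma numRadius_nonneg (A : H →L[ℂ] H) : 0 ≤ numRadius A := by
  obtain ⟨x, hx⟩ := exists_norm_eq H (zero_le_one)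
  exact le_trans (norm_nonneg _) (le_numRadius A hx)

lemma crawford_le (A : H →L[ℂ] H) {x : H} (hx : ‖x‖ = 1) : crawford A ≤ ‖⟪A x, x⟫_ℂ‖ :=
  csInf_le (myS_bddBelow A) ⟨x, hx, rfl⟩

lemma crawford_nonneg (A : H →L[ℂ] H) : 0 ≤ crawford A :=
  le_csInf (myS_ne A) (by rintro r ⟨x, hx, rfl⟩; exact norm_nonneg _)

variable [CompleteSpace H]

lemma inner_le_numRadius {B : H →L[ℂ] H} (z : H) :
    ‖⟪B z, z⟫_ℂ‖ ≤ numRadius B * ‖z‖ ^ 2 := by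
  rcases eq_or_ne z 0 with rfl | hz
  · simp
  · have hnz : ‖z‖ ≠ 0 := norm_ne_zero_iff.mpr hz
    set u : H := (‖z‖ : ℂ)⁻¹ • z with hu
    have hu1 : ‖u‖ = 1 := by
      rw [hu, norm_smul]; simp [hnz]
    have key : ‖⟪B u, u⟫_ℂ‖ = ‖z‖⁻¹ ^ 2 * ‖⟪B z, z⟫_ℂ‖ := by
      rw [hu]
      simp only [map_smul, inner_smul_left, inner_smul_right, norm_mul]
      rw [map_inv₀, Complex.conj_ofReal]
      simp [norm_inv]
      ring
    have := le_numRadius B hu1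
    rw [key] at this
    have h2 : ‖⟪B z, z⟫_ℂ‖ = ‖z‖ ^ 2 * (‖z‖⁻¹ ^ 2 * ‖⟪B z, z⟫_ℂ‖) := by
      field_simp
    rw [h2]
    have hz2 : (0:ℝ) < ‖z‖ ^ 2 := by positivity
    calc ‖z‖ ^ 2 * (‖z‖⁻¹ ^ 2 * ‖⟪B z, z⟫_ℂ‖) ≤ ‖z‖ ^ 2 * numRadius B := by
          exact mul_le_mul_of_nonneg_left this (le_of_lt hz2)
      _ = numRadius B * ‖z‖ ^ 2 := by ring

lemma norm_le_numRadius {B : H →L[ℂ] H} (hB : adjoint B = B) : ‖B‖ ≤ numRadius B := by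
  set M := numRadius B with hM
  have hM0 : 0 ≤ M := numRadius_nonneg B
  have hre : ∀ x y : H, ‖x‖ = 1 → ‖y‖ = 1 → (⟪B x, y⟫_ℂ).re ≤ M := by
    intro x y hx hy
    have pol : ⟪B (x+y), x+y⟫_ℂ - ⟪B (x-y), x-y⟫_ℂ = 2 * ⟪B x, y⟫_ℂ + 2 * ⟪B y, x⟫_ℂ := by
      simp only [map_add, map_sub, inner_add_left, inner_add_right, inner_sub_left,
        inner_sub_right]
      ring
    have hsym : ⟪B y, x⟫_ℂ = (starRingEnd ℂ) ⟪B x, y⟫_ℂ := by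
      calc ⟪B y, x⟫_ℂ = ⟪adjoint B y, x⟫_ℂ := by rw [hB]
        _ = ⟪y, B x⟫_ℂ := adjoint_inner_left B x y
        _ = (starRingEnd ℂ) ⟪B x, y⟫_ℂ := (inner_conj_symm _ _).symm
    have hre4 : (4 : ℝ) * (⟪B x, y⟫_ℂ).re
        = (⟪B (x+y), x+y⟫_ℂ).re - (⟪B (x-y), x-y⟫_ℂ).re := by
      have h := congrArg Complex.re pol
      rw [hsym] at h
      have hc : ∀ c : ℂ, (2*c + 2*(starRingEnd ℂ) c).re = 4*c.re := by
        intro c; simp [Complex.add_re, Complex.mul_re]; ring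
      rw [hc] at h
      rw [Complex.sub_re] at h
      linarith
    have b1 : (⟪B (x+y), x+y⟫_ℂ).re ≤ M * ‖x+y‖^2 := by
      have h := inner_le_numRadius (B := B) (x+y)
      have : (⟪B (x+y), x+y⟫_ℂ).re ≤ ‖⟪B (x+y), x+y⟫_ℂ‖ := by
        exact Complex.re_le_norm _
      linarith
    have b2 : -(M * ‖x-y‖^2) ≤ (⟪B (x-y), x-y⟫_ℂ).re := by
      have h := inner_le_numRadius (B := B) (x-y)
      have habs : |(⟪B (x-y), x-y⟫_ℂ).re| ≤ M * ‖x-y‖^2 := by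
        have : |(⟪B (x-y), x-y⟫_ℂ).re| ≤ ‖⟪B (x-y), x-y⟫_ℂ‖ := by
          exact Complex.abs_re_le_norm _
        linarith
      linarith [(abs_le.mp habs).1]
    have par : ‖x+y‖*‖x+y‖ + ‖x-y‖*‖x-y‖ = 2*(‖x‖*‖x‖+‖y‖*‖y‖) :=
      by simpa only [sq] using parallelogram_law_with_norm ℂ x y
    rw [hx, hy] at par
    nlinarith [b1, b2, par, sq_abs (‖x+y‖), sq_abs (‖x-y‖)]
  have hunit : ∀ x : H, ‖x‖ = 1 → ‖B x‖ ≤ M := by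
    intro x hx
    rcases eq_or_ne (B x) 0 with h0 | h0
    · rw [h0]; simpa using hM0
    · have hn : ‖B x‖ ≠ 0 := norm_ne_zero_iff.mpr h0
      set y : H := (‖B x‖ : ℂ)⁻¹ • B x with hy
      have hy1 : ‖y‖ = 1 := by rw [hy, norm_smul]; simp [hn]
      have hre1 : (⟪B x, B x⟫_ℂ).re = ‖B x‖ ^ 2 := by
        have := @inner_self_eq_norm_sq ℂ H _ _ _ (B x)
        simpa [RCLike.re_to_complex] using this
      have him1 : (⟪B x, B x⟫_ℂ).im = 0 := by
        have := @inner_self_im ℂ H _ _ _ (B x)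
        rw [RCLike.im_to_complex] at this; exact this
      have : (⟪B x, y⟫_ℂ).re = ‖B x‖ := by
        rw [hy, inner_smul_right, Complex.mul_re]
        simp [hre1, him1]
        field_simp
        ring
        rw [← Complex.ofReal_pow, Complex.ofReal_re]
      rw [← this]
      exact hre x y hx hy1
  refine opNorm_le_bound B hM0 ?_
  intro z
  rcases eq_or_ne z 0 with rfl | hz
  · simp
  · have hnz : ‖z‖ ≠ 0 := norm_ne_zero_iff.mpr hz
    set u : H := (‖z‖ : ℂ)⁻¹ • z with hu
    have hu1 : ‖u‖ = 1 := by rw [hu, norm_smul]; simp [hnz]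
    have : B z = (‖z‖ : ℂ) • B u := by
      rw [hu, map_smul, smul_smul]
      rw [mul_inv_cancel₀ (by exact_mod_cast hnz)]
      simp
    rw [this, norm_smul]
    simp only [Complex.norm_real, Real.norm_eq_abs, abs_norm]
    calc ‖z‖ * ‖B u‖ ≤ ‖z‖ * M := by
          exact mul_le_mul_of_nonneg_left (hunit u hu1) (norm_nonneg z)
      _ = M * ‖z‖ := by ring

lemma op_identity (A : H →L[ℂ] H) :
    adjoint A * A + A * adjoint A
      = (reP A + imP A) * (reP A + imP A) + (reP A - imP A) * (reP A - imP A) := by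
  ext x
  simp [reP, imP, mul_apply, add_apply, sub_apply, smul_apply, map_add, map_sub, map_smul,
    smul_add, smul_sub, smul_smul]
  match_scalars <;> (simp [Complex.ext_iff, Complex.mul_re, Complex.mul_im]; try norm_num)

lemma innersum (A : H →L[ℂ] H) (x : H) :
    ⟪(reP A + imP A) x, x⟫_ℂ = (((⟪A x, x⟫_ℂ).re - (⟪A x, x⟫_ℂ).im : ℝ) : ℂ) ∧
    ⟪(reP A - imP A) x, x⟫_ℂ = (((⟪A x, x⟫_ℂ).re + (⟪A x, x⟫_ℂ).im : ℝ) : ℂ) := by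
  have hadj : ⟪adjoint A x, x⟫_ℂ = (starRingEnd ℂ) ⟪A x, x⟫_ℂ := by
    rw [adjoint_inner_left, inner_conj_symm]
  set d := ⟪A x, x⟫_ℂ with hd
  have e1 : ⟪(A + adjoint A) x, x⟫_ℂ = 2 * (d.re : ℂ) := by
    rw [add_apply, inner_add_left, hadj, ← hd]
    apply Complex.ext <;> simp <;> ring
  have e2 : ⟪(A - adjoint A) x, x⟫_ℂ = (2 * Complex.I) * (d.im : ℂ) := by
    rw [sub_apply, inner_sub_left, hadj, ← hd]
    apply Complex.ext <;> simp [Complex.mul_re, Complex.mul_im] <;> ring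
  have h2I : ((2:ℂ) * -Complex.I)⁻¹ = Complex.I / 2 :=
    inv_eq_of_mul_eq_one_right (by ring_nf; simp [Complex.I_sq])
  have eP : ⟪reP A x, x⟫_ℂ = (d.re : ℂ) := by
    rw [reP, smul_apply, inner_smul_left, e1, map_inv₀, map_ofNat]
    field_simp
  have eQ : ⟪imP A x, x⟫_ℂ = -(d.im : ℂ) := by
    rw [imP, smul_apply, inner_smul_left, e2, map_inv₀, map_mul, map_ofNat, Complex.conj_I, h2I]
    field_simp
    ring_nf
    simp [Complex.I_sq]
  constructor
  · rw [add_apply, inner_add_left, eP, eQ]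
    push_cast
    ring
  · rw [sub_apply, inner_sub_left, eP, eQ]
    push_cast
    ring

lemma adjoint_reP_add_imP (A : H →L[ℂ] H) :
    adjoint (reP A + imP A) = reP A + imP A := by
  have h2I : ((2:ℂ) * -Complex.I)⁻¹ = Complex.I / 2 :=
    inv_eq_of_mul_eq_one_right (by ring_nf; simp [Complex.I_sq])
  simp only [reP, imP, map_add, map_smulₛₗ, map_sub, adjoint_adjoint, map_inv₀, map_mul,
    map_ofNat, Complex.conj_I, h2I]
  match_scalars <;> (field_simp; try (ring_nf; simp [Complex.ext_iff]; try norm_num))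

lemma adjoint_reP_sub_imP (A : H →L[ℂ] H) :
    adjoint (reP A - imP A) = reP A - imP A := by
  have h2I : ((2:ℂ) * -Complex.I)⁻¹ = Complex.I / 2 :=
    inv_eq_of_mul_eq_one_right (by ring_nf; simp [Complex.I_sq])
  simp only [reP, imP, map_add, map_smulₛₗ, map_sub, adjoint_adjoint, map_inv₀, map_mul,
    map_ofNat, Complex.conj_I, h2I]
  match_scalars <;> (field_simp; try (ring_nf; simp [Complex.ext_iff]; try norm_num))

end Aux

theorem stmt2 {H : Type*} [NormedAddCommGroup H] [InnerProductSpace ℂ H]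
    [CompleteSpace H] [Nontrivial H] (A : H →L[ℂ] H) :
    (1/4 : ℝ) * ‖adjoint A * A + A * adjoint A‖ +
      (1/4 : ℝ) * crawford (reP A + imP A) ^ 2 +
      (1/4 : ℝ) * crawford (reP A - imP A) ^ 2 ≤ numRadius A ^ 2 := by
  set n := numRadius A with hn
  have hn0 : 0 ≤ n := numRadius_nonneg A
  set c1 := crawford (reP A + imP A) with hc1
  set c2 := crawford (reP A - imP A) with hc2
  have hc10 : 0 ≤ c1 := crawford_nonneg _
  have hc20 : 0 ≤ c2 := crawford_nonneg _
  -- pointwise norms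
  have hnorm1 : ∀ x : H, ‖x‖ = 1 →
      ‖⟪(reP A + imP A) x, x⟫_ℂ‖ = |(⟪A x, x⟫_ℂ).re - (⟪A x, x⟫_ℂ).im| := by
    intro x hx
    rw [(innersum A x).1, Complex.norm_real, Real.norm_eq_abs]
  have hnorm2 : ∀ x : H, ‖x‖ = 1 →
      ‖⟪(reP A - imP A) x, x⟫_ℂ‖ = |(⟪A x, x⟫_ℂ).re + (⟪A x, x⟫_ℂ).im| := by
    intro x hx
    rw [(innersum A x).2, Complex.norm_real, Real.norm_eq_abs]
  have hsq : ∀ x : H, ‖⟪A x, x⟫_ℂ‖^2 = (⟪A x, x⟫_ℂ).re^2 + (⟪A x, x⟫_ℂ).im^2 := by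
    intro x
    rw [Complex.sq_norm, Complex.normSq_apply]
    ring
  -- key pointwise inequalities
  have key1 : ∀ x : H, ‖x‖ = 1 →
      ‖⟪(reP A + imP A) x, x⟫_ℂ‖^2 + c2^2 ≤ 2 * n^2 := by
    intro x hx
    have hb := le_numRadius A hx
    have hc := crawford_le (reP A - imP A) hx
    rw [hnorm2 x hx] at hc
    rw [hnorm1 x hx]
    have h1 := hsq x
    have hbn : ‖⟪A x, x⟫_ℂ‖^2 ≤ n^2 := by
      have := norm_nonneg (⟪A x, x⟫_ℂ)
      nlinarith
    have hcsq : c2^2 ≤ ((⟪A x, x⟫_ℂ).re + (⟪A x, x⟫_ℂ).im)^2 := by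
      nlinarith [abs_nonneg ((⟪A x, x⟫_ℂ).re + (⟪A x, x⟫_ℂ).im),
        sq_abs ((⟪A x, x⟫_ℂ).re + (⟪A x, x⟫_ℂ).im)]
    nlinarith [sq_abs ((⟪A x, x⟫_ℂ).re - (⟪A x, x⟫_ℂ).im)]
  have key2 : ∀ x : H, ‖x‖ = 1 →
      ‖⟪(reP A - imP A) x, x⟫_ℂ‖^2 + c1^2 ≤ 2 * n^2 := by
    intro x hx
    have hb := le_numRadius A hx
    have hc := crawford_le (reP A + imP A) hx
    rw [hnorm1 x hx] at hc
    rw [hnorm2 x hx]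
    have h1 := hsq x
    have hbn : ‖⟪A x, x⟫_ℂ‖^2 ≤ n^2 := by
      have := norm_nonneg (⟪A x, x⟫_ℂ)
      nlinarith
    have hcsq : c1^2 ≤ ((⟪A x, x⟫_ℂ).re - (⟪A x, x⟫_ℂ).im)^2 := by
      nlinarith [abs_nonneg ((⟪A x, x⟫_ℂ).re - (⟪A x, x⟫_ℂ).im),
        sq_abs ((⟪A x, x⟫_ℂ).re - (⟪A x, x⟫_ℂ).im)]
    nlinarith [sq_abs ((⟪A x, x⟫_ℂ).re + (⟪A x, x⟫_ℂ).im)]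
  -- nonnegativity of the bounds
  obtain ⟨x₀, hx₀⟩ := exists_norm_eq H (zero_le_one (α := ℝ))
  have hK1 : 0 ≤ 2 * n^2 - c2^2 := by
    have := key1 x₀ hx₀
    nlinarith [sq_nonneg (‖⟪(reP A + imP A) x₀, x₀⟫_ℂ‖)]
  have hK2 : 0 ≤ 2 * n^2 - c1^2 := by
    have := key2 x₀ hx₀
    nlinarith [sq_nonneg (‖⟪(reP A - imP A) x₀, x₀⟫_ℂ‖)]
  -- operator norm bounds
  have hB1 : ‖reP A + imP A‖^2 ≤ 2 * n^2 - c2^2 := by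
    have hle : numRadius (reP A + imP A) ≤ Real.sqrt (2 * n^2 - c2^2) := by
      apply csSup_le (myS_ne _)
      rintro r ⟨x, hx, rfl⟩
      have := key1 x hx
      have hr0 : (0:ℝ) ≤ ‖⟪(reP A + imP A) x, x⟫_ℂ‖ := norm_nonneg _
      exact (Real.le_sqrt hr0 hK1).mpr (by linarith)
    have hN := le_trans (norm_le_numRadius (adjoint_reP_add_imP A)) hle
    calc ‖reP A + imP A‖^2 ≤ Real.sqrt (2 * n^2 - c2^2)^2 := by
          exact pow_le_pow_left₀ (norm_nonneg _) hN 2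
      _ = 2 * n^2 - c2^2 := Real.sq_sqrt hK1
  have hB2 : ‖reP A - imP A‖^2 ≤ 2 * n^2 - c1^2 := by
    have hle : numRadius (reP A - imP A) ≤ Real.sqrt (2 * n^2 - c1^2) := by
      apply csSup_le (myS_ne _)
      rintro r ⟨x, hx, rfl⟩
      have := key2 x hx
      have hr0 : (0:ℝ) ≤ ‖⟪(reP A - imP A) x, x⟫_ℂ‖ := norm_nonneg _
      exact (Real.le_sqrt hr0 hK2).mpr (by linarith)
    have hN := le_trans (norm_le_numRadius (adjoint_reP_sub_imP A)) hle
    calc ‖reP A - imP A‖^2 ≤ Real.sqrt (2 * n^2 - c1^2)^2 := by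
          exact pow_le_pow_left₀ (norm_nonneg _) hN 2
      _ = 2 * n^2 - c1^2 := Real.sq_sqrt hK2
  -- combine
  have hnorm : ‖adjoint A * A + A * adjoint A‖
      ≤ ‖reP A + imP A‖^2 + ‖reP A - imP A‖^2 := by
    rw [op_identity A]
    calc ‖(reP A + imP A) * (reP A + imP A) + (reP A - imP A) * (reP A - imP A)‖
        ≤ ‖(reP A + imP A) * (reP A + imP A)‖ + ‖(reP A - imP A) * (reP A - imP A)‖ :=
          norm_add_le _ _
      _ ≤ ‖reP A + imP A‖ * ‖reP A + imP A‖ + ‖reP A - imP A‖ * ‖reP A - imP A‖ :=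
          add_le_add (norm_mul_le _ _) (norm_mul_le _ _)
      _ = ‖reP A + imP A‖^2 + ‖reP A - imP A‖^2 := by ring
  linarith
end

section
/- For every bounded linear operator A on a complex Hilbert space, w²(A) ≥ max{β₁, β₂}, where β₁ = (1/2)c²(Re(A) + Im(A)) + (1/2)‖Re(A) − Im(A)‖² and β₂ = (1/2)c²(Re(A) − Im(A)) + (1/2)‖Re(A) + Im(A)‖². -/
open scoped InnerProductSpace
open ContinuousLinearMap

section Aux

variable {H : Type*} [NormedAddCommGroup H] [InnerProductSpace ℂ H] [CompleteSpace H]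

private lemma reP_inner (A : H →L[ℂ] H) (x : H) :
    ⟪(reP A) x, x⟫_ℂ = ((⟪A x, x⟫_ℂ).re : ℂ) := by
  have hadj : ⟪(adjoint A) x, x⟫_ℂ = (starRingEnd ℂ) ⟪A x, x⟫_ℂ := by
    rw [adjoint_inner_left, ← inner_conj_symm]
  rw [reP, ContinuousLinearMap.smul_apply, ContinuousLinearMap.add_apply, inner_smul_left,
    inner_add_left, hadj]
  rw [show (starRingEnd ℂ) ((2 : ℂ)⁻¹) = (2 : ℂ)⁻¹ by simp [Complex.ext_iff]]
  push_cast
  linear_combination (norm := (push_cast; ring)) (Complex.add_conj ⟪A x, x⟫_ℂ) / 2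

private lemma imP_inner (A : H →L[ℂ] H) (x : H) :
    ⟪(imP A) x, x⟫_ℂ = ((-(⟪A x, x⟫_ℂ).im : ℝ) : ℂ) := by
  have hadj : ⟪(adjoint A) x, x⟫_ℂ = (starRingEnd ℂ) ⟪A x, x⟫_ℂ := by
    rw [adjoint_inner_left, ← inner_conj_symm]
  rw [imP, ContinuousLinearMap.smul_apply, ContinuousLinearMap.sub_apply, inner_smul_left,
    inner_sub_left, hadj]
  rw [show ((2 : ℂ) * Complex.I)⁻¹ = -Complex.I / 2 by
    rw [mul_inv, Complex.inv_I]; ring]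
  rw [show (starRingEnd ℂ) (-Complex.I / 2) = Complex.I / 2 by
    rw [map_div₀, map_neg, Complex.conj_I, map_ofNat]; ring]
  push_cast
  linear_combination (norm := (push_cast; ring)) (Complex.I / 2) * Complex.sub_conj ⟪A x, x⟫_ℂ
    + ((⟪A x, x⟫_ℂ).im : ℂ) * Complex.I_sq

private lemma inner_decomp (A : H →L[ℂ] H) (x : H) :
    ‖⟪A x, x⟫_ℂ‖ ^ 2 = 1/2 * ‖⟪(reP A + imP A) x, x⟫_ℂ‖ ^ 2
      + 1/2 * ‖⟪(reP A - imP A) x, x⟫_ℂ‖ ^ 2 := by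
  have h1 : ⟪(reP A + imP A) x, x⟫_ℂ = (((⟪A x, x⟫_ℂ).re - (⟪A x, x⟫_ℂ).im : ℝ) : ℂ) := by
    rw [ContinuousLinearMap.add_apply, inner_add_left, reP_inner, imP_inner]
    push_cast; ring
  have h2 : ⟪(reP A - imP A) x, x⟫_ℂ = (((⟪A x, x⟫_ℂ).re + (⟪A x, x⟫_ℂ).im : ℝ) : ℂ) := by
    rw [ContinuousLinearMap.sub_apply, inner_sub_left, reP_inner, imP_inner]
    push_cast; ring
  rw [h1, h2, Complex.norm_real, Complex.norm_real, Complex.sq_norm,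
    Complex.normSq_apply]
  simp only [Real.norm_eq_abs, sq_abs]
  ring

private lemma selfadj_isSymm {C : H →L[ℂ] H} (hC : IsSelfAdjoint C) (u v : H) :
    ⟪C u, v⟫_ℂ = ⟪u, C v⟫_ℂ :=
  hC.isSymmetric u v

/-- For a self-adjoint operator, a bound on `|⟪Cx,x⟫|` over the unit sphere bounds the norm. -/
private lemma selfadj_norm_le {C : H →L[ℂ] H} (hC : IsSelfAdjoint C) {M : ℝ} (hM : 0 ≤ M)
    (h : ∀ x : H, ‖x‖ = 1 → ‖⟪C x, x⟫_ℂ‖ ≤ M) : ‖C‖ ≤ M := by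
  have hquad : ∀ x : H, ‖⟪C x, x⟫_ℂ‖ ≤ M * ‖x‖ ^ 2 := by
    intro x
    rcases eq_or_ne x 0 with rfl | hx
    · simp
    · have hnx : (0:ℝ) < ‖x‖ := norm_pos_iff.mpr hx
      set y : H := ((‖x‖ : ℂ))⁻¹ • x with hy
      have hyn : ‖y‖ = 1 := by
        rw [hy, norm_smul, norm_inv, Complex.norm_real, Real.norm_eq_abs, abs_of_pos hnx]
        field_simp
      have hin : ⟪C y, y⟫_ℂ = ((‖x‖ : ℂ))⁻¹ * (starRingEnd ℂ) ((‖x‖ : ℂ))⁻¹ * ⟪C x, x⟫_ℂ := by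
        rw [hy, map_smul, inner_smul_left, inner_smul_right]; ring
      have := h y hyn
      rw [hin] at this
      have hcnorm : ‖((‖x‖ : ℂ))⁻¹ * (starRingEnd ℂ) ((‖x‖ : ℂ))⁻¹ * ⟪C x, x⟫_ℂ‖
          = (‖x‖)⁻¹ * (‖x‖)⁻¹ * ‖⟪C x, x⟫_ℂ‖ := by
        rw [norm_mul, norm_mul, norm_inv, RingHomIsometric.norm_map, norm_inv,
          Complex.norm_real, Real.norm_eq_abs, abs_of_pos hnx]
      rw [hcnorm] at this
      have h2 : ‖⟪C x, x⟫_ℂ‖ = ‖x‖ ^ 2 * ((‖x‖)⁻¹ * (‖x‖)⁻¹ * ‖⟪C x, x⟫_ℂ‖) := by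
        field_simp
      rw [h2]
      calc ‖x‖ ^ 2 * ((‖x‖)⁻¹ * (‖x‖)⁻¹ * ‖⟪C x, x⟫_ℂ‖) ≤ ‖x‖ ^ 2 * M := by
            apply mul_le_mul_of_nonneg_left this (by positivity)
        _ = M * ‖x‖ ^ 2 := by ring
  have hre : ∀ x y : H, |(⟪C x, y⟫_ℂ).re| ≤ M / 2 * (‖x‖ ^ 2 + ‖y‖ ^ 2) := by
    intro x y
    have e2 : ⟪C y, x⟫_ℂ = (starRingEnd ℂ) ⟪C x, y⟫_ℂ := by
      rw [selfadj_isSymm hC y x, ← inner_conj_symm]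
    have e1 : ⟪C (x+y), x+y⟫_ℂ - ⟪C (x - y), x - y⟫_ℂ
        = 2 * (⟪C x, y⟫_ℂ + (starRingEnd ℂ) ⟪C x, y⟫_ℂ) := by
      rw [← e2]
      simp only [map_add, map_sub, inner_add_left, inner_add_right, inner_sub_left,
        inner_sub_right]
      ring
    have e1' : ⟪C (x+y), x+y⟫_ℂ - ⟪C (x - y), x - y⟫_ℂ
        = ((4 * (⟪C x, y⟫_ℂ).re : ℝ) : ℂ) := by
      rw [e1, Complex.add_conj]; push_cast; ring
    have e3 : 4 * (⟪C x, y⟫_ℂ).re = (⟪C (x+y), x+y⟫_ℂ).re - (⟪C (x-y), x-y⟫_ℂ).re := by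
      have := congrArg Complex.re e1'
      simpa [Complex.sub_re] using this.symm
    have b1 : |(⟪C (x+y), x+y⟫_ℂ).re| ≤ M * ‖x + y‖ ^ 2 :=
      (Complex.abs_re_le_norm _).trans (by exact hquad _)
    have b2 : |(⟪C (x-y), x-y⟫_ℂ).re| ≤ M * ‖x - y‖ ^ 2 :=
      (Complex.abs_re_le_norm _).trans (by exact hquad _)
    have par := parallelogram_law_with_norm ℂ x y
    have h4 : |4 * (⟪C x, y⟫_ℂ).re| ≤ M * ‖x + y‖ ^ 2 + M * ‖x - y‖ ^ 2 := by
      rw [e3]; exact (abs_sub _ _).trans (add_le_add b1 b2)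
    rw [abs_mul, abs_of_pos (by norm_num : (0:ℝ) < 4)] at h4
    nlinarith [sq_nonneg (‖x + y‖), sq_nonneg (‖x - y‖)]
  refine opNorm_le_bound C hM (fun x => ?_)
  rcases eq_or_ne (C x) 0 with h0 | h0
  · rw [h0, norm_zero]; positivity
  · have hx : x ≠ 0 := by rintro rfl; simp at h0
    have hnx : (0:ℝ) < ‖x‖ := norm_pos_iff.mpr hx
    have hnCx : (0:ℝ) < ‖C x‖ := norm_pos_iff.mpr h0
    set y : H := ((‖x‖ : ℂ) * ((‖C x‖ : ℂ))⁻¹) • C x with hy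
    have hyn : ‖y‖ = ‖x‖ := by
      rw [hy, norm_smul, norm_mul, norm_inv, Complex.norm_real, Complex.norm_real,
        Real.norm_eq_abs, Real.norm_eq_abs, abs_of_pos hnx, abs_of_pos hnCx]
      field_simp
    have hCc : (‖C x‖ : ℂ) ≠ 0 := by exact_mod_cast hnCx.ne'
    have hzy : ⟪C x, y⟫_ℂ = ((‖x‖ * ‖C x‖ : ℝ) : ℂ) := by
      rw [hy, inner_smul_right, inner_self_eq_norm_sq_to_K]
      push_cast
      field_simp
      rfl
    have hval : (⟪C x, y⟫_ℂ).re = ‖x‖ * ‖C x‖ := by rw [hzy, Complex.ofReal_re]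
    have := hre x y
    rw [hval, hyn] at this
    have hb : ‖x‖ * ‖C x‖ ≤ M * ‖x‖ ^ 2 := by
      have h5 : |‖x‖ * ‖C x‖| = ‖x‖ * ‖C x‖ := abs_of_nonneg (by positivity)
      nlinarith [this]
    nlinarith [hb, hnx]

private lemma half_bound (A B C : H →L[ℂ] H) [Nontrivial H]
    (hB : IsSelfAdjoint B) (hC : IsSelfAdjoint C)
    (hid : ∀ x : H, ‖⟪A x, x⟫_ℂ‖ ^ 2
      = 1/2 * ‖⟪B x, x⟫_ℂ‖ ^ 2 + 1/2 * ‖⟪C x, x⟫_ℂ‖ ^ 2) :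
    (1/2 : ℝ) * crawford B ^ 2 + (1/2 : ℝ) * ‖C‖ ^ 2 ≤ numRadius A ^ 2 := by
  obtain ⟨u, hu⟩ := exists_norm_eq H (zero_le_one)
  have hbddA : BddAbove {r : ℝ | ∃ x : H, ‖x‖ = 1 ∧ r = ‖⟪A x, x⟫_ℂ‖} := by
    refine ⟨‖A‖, ?_⟩
    rintro r ⟨x, hx, rfl⟩
    calc ‖⟪A x, x⟫_ℂ‖ ≤ ‖A x‖ * ‖x‖ := norm_inner_le_norm _ _
      _ ≤ ‖A‖ * ‖x‖ * ‖x‖ := by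
          apply mul_le_mul_of_nonneg_right (A.le_opNorm x) (norm_nonneg x)
      _ = ‖A‖ := by rw [hx]; ring
  have hbddB : BddBelow {r : ℝ | ∃ x : H, ‖x‖ = 1 ∧ r = ‖⟪B x, x⟫_ℂ‖} := by
    refine ⟨0, ?_⟩
    rintro r ⟨x, hx, rfl⟩
    exact norm_nonneg _
  have hneB : {r : ℝ | ∃ x : H, ‖x‖ = 1 ∧ r = ‖⟪B x, x⟫_ℂ‖}.Nonempty := ⟨_, u, hu, rfl⟩
  have hw : ∀ x : H, ‖x‖ = 1 → ‖⟪A x, x⟫_ℂ‖ ≤ numRadius A := fun x hx =>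
    le_csSup hbddA ⟨x, hx, rfl⟩
  have hc : ∀ x : H, ‖x‖ = 1 → crawford B ≤ ‖⟪B x, x⟫_ℂ‖ := fun x hx =>
    csInf_le hbddB ⟨x, hx, rfl⟩
  have hc0 : 0 ≤ crawford B := le_csInf hneB (by rintro r ⟨x, hx, rfl⟩; exact norm_nonneg _)
  have hw0 : 0 ≤ numRadius A := (norm_nonneg _).trans (hw u hu)
  set w := numRadius A
  set c := crawford B
  have key1 : ∀ x : H, ‖x‖ = 1 → ‖⟪C x, x⟫_ℂ‖ ^ 2 ≤ 2 * w ^ 2 - c ^ 2 := by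
    intro x hx
    have h1 : ‖⟪A x, x⟫_ℂ‖ ^ 2 ≤ w ^ 2 := by
      apply sq_le_sq' _ (hw x hx)
      linarith [norm_nonneg (⟪A x, x⟫_ℂ), hw x hx]
    have h2 : c ^ 2 ≤ ‖⟪B x, x⟫_ℂ‖ ^ 2 := by
      apply sq_le_sq' _ (hc x hx)
      linarith [hc x hx, hc0]
    have := hid x
    nlinarith
  have hM0 : 0 ≤ 2 * w ^ 2 - c ^ 2 :=
    le_trans (sq_nonneg _) (key1 u hu)
  have hCle : ‖C‖ ≤ Real.sqrt (2 * w ^ 2 - c ^ 2) := by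
    apply selfadj_norm_le hC (Real.sqrt_nonneg _)
    intro x hx
    rw [show ‖⟪C x, x⟫_ℂ‖ = Real.sqrt (‖⟪C x, x⟫_ℂ‖ ^ 2) by
      rw [Real.sqrt_sq (norm_nonneg _)]]
    exact Real.sqrt_le_sqrt (key1 x hx)
  have hC2 : ‖C‖ ^ 2 ≤ 2 * w ^ 2 - c ^ 2 := by
    calc ‖C‖ ^ 2 ≤ Real.sqrt (2 * w ^ 2 - c ^ 2) ^ 2 :=
          pow_le_pow_left₀ (norm_nonneg _) hCle 2
      _ = 2 * w ^ 2 - c ^ 2 := Real.sq_sqrt hM0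
  linarith

private lemma reP_selfAdjoint (A : H →L[ℂ] H) : IsSelfAdjoint (reP A) := by
  rw [IsSelfAdjoint, reP, ← ContinuousLinearMap.star_eq_adjoint, star_smul, star_add,
    star_star]
  simp [add_comm]

private lemma imP_selfAdjoint (A : H →L[ℂ] H) : IsSelfAdjoint (imP A) := by
  rw [IsSelfAdjoint, imP, ← ContinuousLinearMap.star_eq_adjoint, star_smul, star_sub,
    star_star]
  have : star ((2 * Complex.I)⁻¹) = -(2 * Complex.I)⁻¹ := by
    simp [Complex.ext_iff]
  rw [this]
  module

end Aux

theorem stmt3 {H : Type*} [NormedAddCommGroup H] [InnerProductSpace ℂ H]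
    [CompleteSpace H] [Nontrivial H] (A : H →L[ℂ] H) :
    max ((1/2 : ℝ) * crawford (reP A + imP A) ^ 2 + (1/2 : ℝ) * ‖reP A - imP A‖ ^ 2)
        ((1/2 : ℝ) * crawford (reP A - imP A) ^ 2 + (1/2 : ℝ) * ‖reP A + imP A‖ ^ 2) ≤
      numRadius A ^ 2 := by
  have hB : IsSelfAdjoint (reP A + imP A) := (reP_selfAdjoint A).add (imP_selfAdjoint A)
  have hC : IsSelfAdjoint (reP A - imP A) := (reP_selfAdjoint A).sub (imP_selfAdjoint A)
  apply max_le
  · exact half_bound A _ _ hB hC (fun x => inner_decomp A x)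
  · exact half_bound A _ _ hC hB (fun x => by rw [inner_decomp A x]; ring)
end

section
/- For every bounded linear operator A on a complex Hilbert space, (1/2)‖Re(A) − Im(A)‖² ≤ w²(A) and (1/2)‖Re(A) + Im(A)‖² ≤ w²(A). -/
open scoped InnerProductSpace
open ContinuousLinearMap

section AuxLemmas

variable {H : Type*} [NormedAddCommGroup H] [InnerProductSpace ℂ H] [CompleteSpace H]

private lemma conj_two : (starRingEnd ℂ) 2 = 2 := map_ofNat _ 2

private lemma conj_twoI_inv : (starRingEnd ℂ) (2 * Complex.I)⁻¹ = -((2 * Complex.I)⁻¹) := by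
  rw [map_inv₀, map_mul, conj_two, Complex.conj_I, mul_neg, inv_neg]

private lemma adjoint_reP (A : H →L[ℂ] H) : adjoint (reP A) = reP A := by
  rw [reP, map_smulₛₗ, map_add, adjoint_adjoint, map_inv₀, conj_two, add_comm]

private lemma adjoint_imP (A : H →L[ℂ] H) : adjoint (imP A) = imP A := by
  rw [imP, map_smulₛₗ, map_sub, adjoint_adjoint, conj_twoI_inv, neg_smul, smul_sub,
    smul_sub, neg_sub]

private lemma inner_reP (A : H →L[ℂ] H) (x : H) :
    ⟪reP A x, x⟫_ℂ = (((⟪A x, x⟫_ℂ).re : ℝ) : ℂ) := by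
  rw [reP]
  simp only [smul_apply, add_apply, inner_smul_left, inner_add_left, adjoint_inner_left,
    ← inner_conj_symm x (A x)]
  rw [Complex.add_conj, map_inv₀, conj_two]
  push_cast
  ring

private lemma inner_imP (A : H →L[ℂ] H) (x : H) :
    ⟪imP A x, x⟫_ℂ = -(((⟪A x, x⟫_ℂ).im : ℝ) : ℂ) := by
  rw [imP]
  simp only [smul_apply, sub_apply, inner_smul_left, inner_sub_left, adjoint_inner_left,
    ← inner_conj_symm x (A x)]
  rw [Complex.sub_conj, conj_twoI_inv]
  have : Complex.I ≠ 0 := Complex.I_ne_zero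
  field_simp
  push_cast
  ring

/-- A self-adjoint operator whose quadratic form is bounded by `C` has norm at most `C`. -/
private lemma sa_norm_le {B : H →L[ℂ] H} (hB : adjoint B = B) {C : ℝ} (hC : 0 ≤ C)
    (h : ∀ x : H, ‖⟪B x, x⟫_ℂ‖ ≤ C * ‖x‖ ^ 2) : ‖B‖ ≤ C := by
  refine opNorm_le_bound B hC fun x => ?_
  rcases eq_or_ne (B x) 0 with hBx | hBx
  · simp [hBx]; positivity
  have key : ∀ y : H, 4 * ((⟪B x, y⟫_ℂ).re) ≤ 2 * C * (‖x‖ ^ 2 + ‖y‖ ^ 2) := by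
    intro y
    have hconj : ⟪B y, x⟫_ℂ = (starRingEnd ℂ) ⟪B x, y⟫_ℂ := by
      rw [← hB, adjoint_inner_left, ← inner_conj_symm, hB]
    have expand : ⟪B (x + y), x + y⟫_ℂ - ⟪B (x - y), x - y⟫_ℂ
        = 2 * ⟪B x, y⟫_ℂ + 2 * ⟪B y, x⟫_ℂ := by
      simp only [map_add, map_sub, inner_add_left, inner_add_right,
        inner_sub_left, inner_sub_right]
      ring
    have h4 : ⟪B (x + y), x + y⟫_ℂ - ⟪B (x - y), x - y⟫_ℂ
        = 4 * ((⟪B x, y⟫_ℂ).re : ℂ) := by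
      linear_combination (norm := (push_cast; ring1)) expand + 2 * hconj +
        2 * Complex.add_conj ⟪B x, y⟫_ℂ
    have hre : (⟪B (x + y), x + y⟫_ℂ).re - (⟪B (x - y), x - y⟫_ℂ).re
        = 4 * (⟪B x, y⟫_ℂ).re := by
      have := congrArg Complex.re h4
      simpa using this
    have h1 : (⟪B (x + y), x + y⟫_ℂ).re ≤ C * ‖x + y‖ ^ 2 :=
      le_trans (Complex.re_le_norm _) (h _)
    have h2 : -(C * ‖x - y‖ ^ 2) ≤ (⟪B (x - y), x - y⟫_ℂ).re := by
      have := le_trans (neg_le_abs (⟪B (x - y), x - y⟫_ℂ).re)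
        (le_trans (Complex.abs_re_le_norm _) (h (x - y)))
      linarith [abs_le.mp (le_trans (Complex.abs_re_le_norm _) (h (x - y)))]
    have hpar : ‖x + y‖ * ‖x + y‖ + ‖x - y‖ * ‖x - y‖ = 2 * (‖x‖ * ‖x‖ + ‖y‖ * ‖y‖) :=
      by simpa only [sq] using parallelogram_law_with_norm ℂ x y
    nlinarith [h1, h2, hpar]
  have hBxpos : (0:ℝ) < ‖B x‖ := norm_pos_iff.mpr hBx
  set y : H := ((‖x‖ / ‖B x‖ : ℝ) : ℂ) • B x with hy
  have hyre : (⟪B x, y⟫_ℂ).re = ‖x‖ * ‖B x‖ := by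
    rw [hy, inner_smul_right]
    have : ⟪B x, B x⟫_ℂ = (‖B x‖ : ℂ) ^ 2 := by
      rw [inner_self_eq_norm_sq_to_K]; norm_num
    rw [this, ← Complex.ofReal_pow, ← Complex.ofReal_mul, Complex.ofReal_re]
    field_simp
  have hyn : ‖y‖ = ‖x‖ := by
    rw [hy, norm_smul]
    simp [abs_div, abs_of_nonneg (norm_nonneg x), hBxpos.ne']
  have := key y
  rw [hyre, hyn] at this
  rcases eq_or_lt_of_le (norm_nonneg x) with hx0 | hx0
  · exfalso; apply hBx; rw [show x = 0 from (norm_eq_zero.mp hx0.symm)]; simp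
  nlinarith

private lemma main_aux [Nontrivial H] (A B : H →L[ℂ] H) (hadj : adjoint B = B) (ε : ℝ)
    (hε : ε ^ 2 = 1)
    (hval : ∀ x : H, ⟪B x, x⟫_ℂ = (((⟪A x, x⟫_ℂ).re + ε * (⟪A x, x⟫_ℂ).im : ℝ) : ℂ)) :
    (1/2 : ℝ) * ‖B‖ ^ 2 ≤ numRadius A ^ 2 := by
  set w := numRadius A with hw
  have hbdd : BddAbove {r : ℝ | ∃ x : H, ‖x‖ = 1 ∧ r = ‖⟪A x, x⟫_ℂ‖} := by
    refine ⟨‖A‖, fun r hr => ?_⟩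
    obtain ⟨x, hx, rfl⟩ := hr
    calc ‖⟪A x, x⟫_ℂ‖ ≤ ‖A x‖ * ‖x‖ := norm_inner_le_norm _ _
      _ ≤ ‖A‖ * ‖x‖ * ‖x‖ := by gcongr; exact A.le_opNorm x
      _ = ‖A‖ := by rw [hx]; ring
  have hunit : ∀ x : H, ‖x‖ = 1 → ‖⟪A x, x⟫_ℂ‖ ≤ w :=
    fun x hx => le_csSup hbdd ⟨x, hx, rfl⟩
  have hwnn : 0 ≤ w := by
    obtain ⟨x, hx⟩ := exists_norm_eq H (zero_le_one)
    exact le_trans (norm_nonneg _) (hunit x hx)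
  have hhom : ∀ x : H, ‖⟪A x, x⟫_ℂ‖ ≤ w * ‖x‖ ^ 2 := by
    intro x
    rcases eq_or_ne x 0 with rfl | hx
    · simp
    · have hxpos : (0:ℝ) < ‖x‖ := norm_pos_iff.mpr hx
      set u : H := ((‖x‖⁻¹ : ℝ) : ℂ) • x with hu
      have hun : ‖u‖ = 1 := by
        rw [hu, norm_smul]
        simp [abs_of_pos (inv_pos.mpr hxpos), inv_mul_cancel₀ hxpos.ne']
      have hinner : ⟪A u, u⟫_ℂ = ((‖x‖⁻¹ ^ 2 : ℝ) : ℂ) * ⟪A x, x⟫_ℂ := by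
        rw [hu]
        simp only [map_smul, inner_smul_left, inner_smul_right, Complex.conj_ofReal]
        push_cast
        ring
      have := hunit u hun
      rw [hinner] at this
      rw [norm_mul] at this
      simp only [Complex.norm_real, norm_pow, Real.norm_eq_abs,
        abs_of_pos (inv_pos.mpr hxpos)] at this
      calc ‖⟪A x, x⟫_ℂ‖ = ‖x‖ ^ 2 * (‖x‖⁻¹ ^ 2 * ‖⟪A x, x⟫_ℂ‖) := by
            field_simp
        _ ≤ ‖x‖ ^ 2 * w := mul_le_mul_of_nonneg_left this (by positivity)
        _ = w * ‖x‖ ^ 2 := by ring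
  have hBbound : ‖B‖ ≤ Real.sqrt 2 * w := by
    refine sa_norm_le hadj (by positivity) fun x => ?_
    rw [hval x]
    set z := ⟪A x, x⟫_ℂ
    have hzn : ‖z‖ = Real.sqrt (z.re ^ 2 + z.im ^ 2) := by
      rw [Complex.norm_def, Complex.normSq_apply]
      ring_nf
    have h1 : ‖(((z.re + ε * z.im : ℝ)) : ℂ)‖ = |z.re + ε * z.im| := by
      rw [Complex.norm_real, Real.norm_eq_abs]
    rw [h1]
    have h2 : |z.re + ε * z.im| ≤ Real.sqrt 2 * ‖z‖ := by
      rw [hzn, ← Real.sqrt_sq_eq_abs, ← Real.sqrt_mul (by norm_num : (0:ℝ) ≤ 2)]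
      apply Real.sqrt_le_sqrt
      nlinarith [sq_nonneg (z.re - ε * z.im), sq_nonneg (z.re * ε - z.im)]
    calc |z.re + ε * z.im| ≤ Real.sqrt 2 * ‖z‖ := h2
      _ ≤ Real.sqrt 2 * (w * ‖x‖ ^ 2) :=
          mul_le_mul_of_nonneg_left (hhom x) (Real.sqrt_nonneg 2)
      _ = Real.sqrt 2 * w * ‖x‖ ^ 2 := by ring
  have h3 : ‖B‖ ^ 2 ≤ (Real.sqrt 2 * w) ^ 2 :=
    pow_le_pow_left₀ (norm_nonneg B) hBbound 2
  rw [mul_pow, Real.sq_sqrt (by norm_num : (0:ℝ) ≤ 2)] at h3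
  linarith

end AuxLemmas

theorem stmt7 {H : Type*} [NormedAddCommGroup H] [InnerProductSpace ℂ H]
    [CompleteSpace H] [Nontrivial H] (A : H →L[ℂ] H) :
    (1/2 : ℝ) * ‖reP A - imP A‖ ^ 2 ≤ numRadius A ^ 2 ∧
    (1/2 : ℝ) * ‖reP A + imP A‖ ^ 2 ≤ numRadius A ^ 2 := by
  constructor
  · refine main_aux A (reP A - imP A) ?_ 1 (by norm_num) fun x => ?_
    · rw [map_sub, adjoint_reP, adjoint_imP]
    · rw [sub_apply, inner_sub_left, inner_reP, inner_imP]
      push_cast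
      ring
  · refine main_aux A (reP A + imP A) ?_ (-1) (by norm_num) fun x => ?_
    · rw [map_add, adjoint_reP, adjoint_imP]
    · rw [add_apply, inner_add_left, inner_reP, inner_imP]
      push_cast
      ring
end

section
/- Let A be a bounded linear operator on a complex Hilbert space with w²(A) = (1/4)‖A*A + AA*‖. Then the Crawford numbers of Re(A) + Im(A) and of Re(A) − Im(A) are both zero; consequently there exists a sequence (xₙ) of unit vectors such that the limits limₙ |⟨Re(A)xₙ, xₙ⟩| and limₙ |⟨Im(A)xₙ, xₙ⟩| exist and are equal. -/
open scoped InnerProductSpace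
open ContinuousLinearMap

section AuxLemmas

set_option linter.unusedSectionVars false

variable {H : Type*} [NormedAddCommGroup H] [InnerProductSpace ℂ H] [CompleteSpace H]

lemma aux_quad_bound (T : H →L[ℂ] H) {m : ℝ}
    (hm : ∀ x : H, ‖x‖ = 1 → ‖⟪T x, x⟫_ℂ‖ ≤ m) (x : H) :
    ‖⟪T x, x⟫_ℂ‖ ≤ m * ‖x‖ ^ 2 := by
  rcases eq_or_ne x 0 with rfl | hx
  · simp
  · have hnx : (0:ℝ) < ‖x‖ := norm_pos_iff.2 hx
    set c : ℂ := ((‖x‖⁻¹ : ℝ) : ℂ) with hc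
    have hu1 : ‖c • x‖ = 1 := by
      rw [norm_smul, hc, Complex.norm_real, Real.norm_eq_abs, abs_of_pos (by positivity)]
      field_simp
    have := hm (c • x) hu1
    rw [map_smul, inner_smul_left, inner_smul_right] at this
    rw [norm_mul, norm_mul, RCLike.norm_conj, hc, Complex.norm_real, Real.norm_eq_abs,
      abs_of_pos (by positivity)] at this
    have h2 : ‖x‖⁻¹ * (‖x‖⁻¹ * ‖⟪T x, x⟫_ℂ‖) ≤ m := this
    have e3 : ‖x‖⁻¹ * (‖x‖⁻¹ * ‖⟪T x, x⟫_ℂ‖) * ‖x‖ ^ 2 = ‖⟪T x, x⟫_ℂ‖ := by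
      rw [pow_two]; field_simp
    have := mul_le_mul_of_nonneg_right h2 (sq_nonneg ‖x‖)
    linarith

lemma aux_selfadj_opNorm_le (T : H →L[ℂ] H) (hT : ContinuousLinearMap.adjoint T = T)
    {m : ℝ} (hm0 : 0 ≤ m) (hm : ∀ x : H, ‖x‖ = 1 → ‖⟪T x, x⟫_ℂ‖ ≤ m) : ‖T‖ ≤ m := by
  have key := aux_quad_bound T hm
  apply ContinuousLinearMap.opNorm_le_bound _ hm0
  intro x
  rcases eq_or_ne (T x) 0 with h0 | h0
  · rw [h0]; simp; exact mul_nonneg hm0 (norm_nonneg x)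
  · have hTx : (0:ℝ) < ‖T x‖ := norm_pos_iff.2 h0
    have hx : x ≠ 0 := fun h => h0 (by simp [h])
    have hnx : (0:ℝ) < ‖x‖ := norm_pos_iff.2 hx
    set y : H := ((‖x‖ / ‖T x‖ : ℝ) : ℂ) • T x with hy
    have hny : ‖y‖ = ‖x‖ := by
      rw [hy, norm_smul, Complex.norm_real, Real.norm_eq_abs,
        abs_of_nonneg (by positivity), div_mul_cancel₀ _ hTx.ne']
    have hconj : ⟪T y, x⟫_ℂ = (starRingEnd ℂ) ⟪T x, y⟫_ℂ := by
      conv_lhs => rw [← hT]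
      rw [adjoint_inner_left, ← inner_conj_symm]
    have hre2 : (⟪T y, x⟫_ℂ).re = (⟪T x, y⟫_ℂ).re := by rw [hconj, Complex.conj_re]
    have hpol : (⟪T (x + y), x + y⟫_ℂ).re - (⟪T (x - y), x - y⟫_ℂ).re
        = 4 * (⟪T x, y⟫_ℂ).re := by
      rw [map_add, map_sub, inner_add_left, inner_add_right, inner_add_right,
        inner_sub_left, inner_sub_right, inner_sub_right]
      simp only [Complex.add_re, Complex.sub_re]
      rw [hre2]; ring
    have h1 : (⟪T (x + y), x + y⟫_ℂ).re ≤ m * ‖x + y‖ ^ 2 :=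
      le_trans (Complex.re_le_norm _) (key _)
    have h2 : -(m * ‖x - y‖ ^ 2) ≤ (⟪T (x - y), x - y⟫_ℂ).re := by
      have ha := Complex.abs_re_le_norm ⟪T (x - y), x - y⟫_ℂ
      have hb := key (x - y)
      have hc := neg_abs_le (⟪T (x - y), x - y⟫_ℂ).re
      have hd : ‖⟪T (x - y), x - y⟫_ℂ‖ = ‖⟪T (x - y), x - y⟫_ℂ‖ := rfl
      linarith
    have hpar : ‖x + y‖ ^ 2 + ‖x - y‖ ^ 2 = 2 * (‖x‖ ^ 2 + ‖y‖ ^ 2) := by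
      have := parallelogram_law_with_norm ℂ x y
      nlinarith [this]
    have hre : (⟪T x, y⟫_ℂ).re = ‖x‖ * ‖T x‖ := by
      rw [hy, inner_smul_right, Complex.mul_re, Complex.ofReal_re, Complex.ofReal_im,
        ← RCLike.re_to_complex, ← RCLike.im_to_complex, inner_self_eq_norm_sq, inner_self_im]
      field_simp
      ring
    have hny2 : ‖y‖ ^ 2 = ‖x‖ ^ 2 := by rw [hny]
    nlinarith [hpol, h1, h2, hpar, hre, hny2, hnx]

lemma aux_adj_reP (A : H →L[ℂ] H) : ContinuousLinearMap.adjoint (reP A) = reP A := by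
  rw [← star_eq_adjoint]
  simp only [reP, ← star_eq_adjoint, star_smul, star_add, star_star]
  rw [show star ((2:ℂ)⁻¹) = (2:ℂ)⁻¹ by simp [map_ofNat], add_comm]

lemma aux_adj_imP (A : H →L[ℂ] H) : ContinuousLinearMap.adjoint (imP A) = imP A := by
  rw [← star_eq_adjoint]
  simp only [imP, ← star_eq_adjoint, star_smul, star_sub, star_star]
  rw [show star ((2*Complex.I:ℂ)⁻¹) = -(2*Complex.I)⁻¹ by
    simp [star_inv₀, Complex.star_def, map_mul, Complex.conj_I, map_ofNat]]
  rw [neg_smul, ← smul_neg, neg_sub]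

lemma aux_op_identity (A : H →L[ℂ] H) :
    (reP A + imP A) * (reP A + imP A) + (reP A - imP A) * (reP A - imP A)
      = adjoint A * A + A * adjoint A := by
  set A' := ContinuousLinearMap.adjoint A with hA'
  have hexp : (reP A + imP A) * (reP A + imP A) + (reP A - imP A) * (reP A - imP A)
      = (reP A * reP A + reP A * reP A) + (imP A * imP A + imP A * imP A) := by
    noncomm_ring
  have hU : reP A * reP A = ((2:ℂ)⁻¹ * (2:ℂ)⁻¹) • ((A + A') * (A + A')) := by
    rw [reP, smul_mul_assoc, mul_smul_comm, smul_smul]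
  have hV : imP A * imP A
      = ((2*Complex.I)⁻¹ * (2*Complex.I)⁻¹) • ((A - A') * (A - A')) := by
    rw [imP, smul_mul_assoc, mul_smul_comm, smul_smul]
  have hc1 : ((2:ℂ)⁻¹ * (2:ℂ)⁻¹) = (4:ℂ)⁻¹ := by norm_num
  have hc2 : ((2*Complex.I)⁻¹ * (2*Complex.I)⁻¹) = -(4:ℂ)⁻¹ := by
    rw [← mul_inv, show (2*Complex.I) * (2*Complex.I) = (-4 : ℂ) by
        rw [show (2*Complex.I)*(2*Complex.I) = 4*(Complex.I*Complex.I) by ring,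
          Complex.I_mul_I]; norm_num,
      inv_neg]
  have hPQ : (A + A') * (A + A') + (-(1:ℂ)) • ((A - A') * (A - A'))
      = (2:ℂ) • (A' * A + A * A') := by
    rw [neg_smul, one_smul, two_smul]
    have : (A + A') * (A + A') - (A - A') * (A - A')
        = (A' * A + A * A') + (A' * A + A * A') := by noncomm_ring
    rw [sub_eq_add_neg] at this
    exact this
  rw [hexp, hU, hV, hc1, hc2, ← add_smul, ← add_smul]
  have e1 : ((4:ℂ)⁻¹ + 4⁻¹) = 2⁻¹ := by norm_num
  have e2 : (-(4:ℂ)⁻¹ + -4⁻¹) = 2⁻¹ * (-1) := by norm_num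
  rw [e1, e2, mul_smul, ← smul_add, hPQ, smul_smul]
  norm_num

lemma aux_inner_reP (A : H →L[ℂ] H) (x : H) :
    ⟪reP A x, x⟫_ℂ = ((⟪A x, x⟫_ℂ).re : ℂ) := by
  have hap : (reP A) x = (2:ℂ)⁻¹ • (A x + ContinuousLinearMap.adjoint A x) := rfl
  rw [hap, inner_smul_left, inner_add_left, adjoint_inner_left,
    ← inner_conj_symm x (A x)]
  rw [Complex.add_conj]
  rw [show (starRingEnd ℂ) ((2:ℂ)⁻¹) = (2:ℂ)⁻¹ by simp [map_ofNat]]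
  push_cast
  ring

lemma aux_inner_imP (A : H →L[ℂ] H) (x : H) :
    ⟪imP A x, x⟫_ℂ = (-(⟪A x, x⟫_ℂ).im : ℂ) := by
  have hap : (imP A) x = (2*Complex.I)⁻¹ • (A x - ContinuousLinearMap.adjoint A x) := rfl
  rw [hap, inner_smul_left, inner_sub_left, adjoint_inner_left,
    ← inner_conj_symm x (A x)]
  rw [Complex.sub_conj]
  rw [show (starRingEnd ℂ) ((2*Complex.I:ℂ)⁻¹) = -(2*Complex.I)⁻¹ by
    simp [star_inv₀, Complex.star_def, map_mul, Complex.conj_I, map_ofNat]]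
  rw [mul_inv, Complex.inv_I]
  push_cast
  linear_combination ((⟪A x, x⟫_ℂ).im : ℂ) * Complex.I_sq

lemma aux_inner_sum_sq (A : H →L[ℂ] H) (x : H) :
    ‖⟪(reP A + imP A) x, x⟫_ℂ‖^2 + ‖⟪(reP A - imP A) x, x⟫_ℂ‖^2
      = 2 * ‖⟪A x, x⟫_ℂ‖^2 := by
  rw [ContinuousLinearMap.add_apply, ContinuousLinearMap.sub_apply, inner_add_left,
    inner_sub_left, aux_inner_reP, aux_inner_imP]
  set z := ⟪A x, x⟫_ℂ with hz
  rw [show ((z.re:ℂ) + (-z.im:ℂ)) = ((z.re - z.im : ℝ):ℂ) by push_cast; ring,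
    show ((z.re:ℂ) - (-z.im:ℂ)) = ((z.re + z.im : ℝ):ℂ) by push_cast; ring,
    Complex.norm_real, Complex.norm_real, Real.norm_eq_abs, Real.norm_eq_abs,
    sq_abs, sq_abs]
  have hn : ‖z‖^2 = z.re^2 + z.im^2 := by
    rw [Complex.sq_norm, Complex.normSq_apply]; ring
  rw [hn]; ring

lemma aux_exists_small (S T : H →L[ℂ] H) (hT : ContinuousLinearMap.adjoint T = T) {w : ℝ}
    (x₀ : H) (hx₀ : ‖x₀‖ = 1)
    (hST : ∀ x : H, ‖x‖ = 1 → ‖⟪S x, x⟫_ℂ‖^2 + ‖⟪T x, x⟫_ℂ‖^2 ≤ 2*w^2)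
    (hTlow : 2*w^2 ≤ ‖T‖^2) {ε : ℝ} (hε : 0 < ε) :
    ∃ y : H, ‖y‖ = 1 ∧ ‖⟪S y, y⟫_ℂ‖ < ε := by
  by_contra hcon
  push_neg at hcon
  have hε2 : ε^2 ≤ 2*w^2 := by
    have h1 := hcon x₀ hx₀
    have h2 := hST x₀ hx₀
    nlinarith [sq_nonneg ‖⟪T x₀, x₀⟫_ℂ‖, norm_nonneg (⟪S x₀, x₀⟫_ℂ)]
  set m := Real.sqrt (2*w^2 - ε^2) with hm
  have hm0 : 0 ≤ m := Real.sqrt_nonneg _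
  have hmsq : m^2 = 2*w^2 - ε^2 := Real.sq_sqrt (by linarith)
  have hbound : ∀ y : H, ‖y‖ = 1 → ‖⟪T y, y⟫_ℂ‖ ≤ m := by
    intro y hy
    have h1 := hcon y hy
    have h2 := hST y hy
    have h3 : ‖⟪T y, y⟫_ℂ‖^2 ≤ m^2 := by
      nlinarith [norm_nonneg (⟪S y, y⟫_ℂ)]
    nlinarith [norm_nonneg (⟪T y, y⟫_ℂ)]
  have hn := aux_selfadj_opNorm_le T hT hm0 hbound
  have : ‖T‖^2 ≤ m^2 := by nlinarith [norm_nonneg T]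
  nlinarith

lemma aux_crawford_zero (S : H →L[ℂ] H)
    (hsmall : ∀ ε : ℝ, 0 < ε → ∃ y : H, ‖y‖ = 1 ∧ ‖⟪S y, y⟫_ℂ‖ < ε) :
    crawford S = 0 := by
  obtain ⟨y₁, hy₁, -⟩ := hsmall 1 one_pos
  have hne : {r : ℝ | ∃ x : H, ‖x‖ = 1 ∧ r = ‖⟪S x, x⟫_ℂ‖}.Nonempty := ⟨_, y₁, hy₁, rfl⟩
  have hbd : BddBelow {r : ℝ | ∃ x : H, ‖x‖ = 1 ∧ r = ‖⟪S x, x⟫_ℂ‖} := by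
    refine ⟨0, ?_⟩
    rintro r ⟨x, hx, rfl⟩
    positivity
  have h0 : 0 ≤ crawford S := by
    apply le_csInf hne
    rintro r ⟨x, hx, rfl⟩
    positivity
  refine le_antisymm ?_ h0
  by_contra hc
  push_neg at hc
  obtain ⟨y, hy, hval⟩ := hsmall (crawford S) hc
  have : crawford S ≤ ‖⟪S y, y⟫_ℂ‖ := csInf_le hbd ⟨y, hy, rfl⟩
  linarith

end AuxLemmas

theorem stmt10 {H : Type*} [NormedAddCommGroup H] [InnerProductSpace ℂ H]
    [CompleteSpace H] [Nontrivial H] (A : H →L[ℂ] H)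
    (h : numRadius A ^ 2 = (1/4 : ℝ) * ‖adjoint A * A + A * adjoint A‖) :
    crawford (reP A + imP A) = 0 ∧ crawford (reP A - imP A) = 0 ∧
    ∃ x : ℕ → H, (∀ n, ‖x n‖ = 1) ∧ ∃ L : ℝ,
      Filter.Tendsto (fun n => ‖⟪reP A (x n), x n⟫_ℂ‖) Filter.atTop (nhds L) ∧
      Filter.Tendsto (fun n => ‖⟪imP A (x n), x n⟫_ℂ‖) Filter.atTop (nhds L) := by
  classical
  set S := reP A + imP A with hSdef
  set T := reP A - imP A with hTdef
  set w := numRadius A with hwdef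
  obtain ⟨x₀, hx₀⟩ : ∃ x : H, ‖x‖ = (1:ℝ) := exists_norm_eq H zero_le_one
  -- basic facts about the numerical radius
  have hbddA : BddAbove {r : ℝ | ∃ x : H, ‖x‖ = 1 ∧ r = ‖⟪A x, x⟫_ℂ‖} := by
    refine ⟨‖A‖, ?_⟩
    rintro r ⟨x, hx, rfl⟩
    calc ‖⟪A x, x⟫_ℂ‖ ≤ ‖A x‖ * ‖x‖ := norm_inner_le_norm _ _
      _ ≤ (‖A‖ * ‖x‖) * ‖x‖ := by
          apply mul_le_mul_of_nonneg_right (A.le_opNorm x) (norm_nonneg x)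
      _ = ‖A‖ := by rw [hx]; ring
  have hnr : ∀ x : H, ‖x‖ = 1 → ‖⟪A x, x⟫_ℂ‖ ≤ w := fun x hx =>
    le_csSup hbddA ⟨x, hx, rfl⟩
  have hw0 : 0 ≤ w := le_trans (norm_nonneg _) (hnr x₀ hx₀)
  -- numerical values of S and T
  have hST : ∀ x : H, ‖x‖ = 1 → ‖⟪S x, x⟫_ℂ‖^2 + ‖⟪T x, x⟫_ℂ‖^2 ≤ 2 * w^2 := by
    intro x hx
    rw [hSdef, hTdef, aux_inner_sum_sq]
    have := hnr x hx
    nlinarith [norm_nonneg (⟪A x, x⟫_ℂ)]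
  have hTS : ∀ x : H, ‖x‖ = 1 → ‖⟪T x, x⟫_ℂ‖^2 + ‖⟪S x, x⟫_ℂ‖^2 ≤ 2 * w^2 := by
    intro x hx; have := hST x hx; linarith
  -- self-adjointness
  have hSadj : ContinuousLinearMap.adjoint S = S := by
    rw [hSdef, ← star_eq_adjoint, star_add, star_eq_adjoint, star_eq_adjoint,
      aux_adj_reP, aux_adj_imP]
  have hTadj : ContinuousLinearMap.adjoint T = T := by
    rw [hTdef, ← star_eq_adjoint, star_sub, star_eq_adjoint, star_eq_adjoint,
      aux_adj_reP, aux_adj_imP]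
  -- norm upper bounds
  have hsq2 : (Real.sqrt 2 * w)^2 = 2 * w^2 := by
    rw [mul_pow, Real.sq_sqrt (by norm_num : (0:ℝ) ≤ 2)]
  have hSub : ∀ x : H, ‖x‖ = 1 → ‖⟪S x, x⟫_ℂ‖ ≤ Real.sqrt 2 * w := by
    intro x hx
    have h1 := hST x hx
    nlinarith [norm_nonneg (⟪S x, x⟫_ℂ), sq_nonneg ‖⟪T x, x⟫_ℂ‖,
      mul_nonneg (Real.sqrt_nonneg 2) hw0]
  have hTub : ∀ x : H, ‖x‖ = 1 → ‖⟪T x, x⟫_ℂ‖ ≤ Real.sqrt 2 * w := by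
    intro x hx
    have h1 := hST x hx
    nlinarith [norm_nonneg (⟪T x, x⟫_ℂ), sq_nonneg ‖⟪S x, x⟫_ℂ‖,
      mul_nonneg (Real.sqrt_nonneg 2) hw0]
  have hSnorm : ‖S‖ ≤ Real.sqrt 2 * w :=
    aux_selfadj_opNorm_le S hSadj (mul_nonneg (Real.sqrt_nonneg 2) hw0) hSub
  have hTnorm : ‖T‖ ≤ Real.sqrt 2 * w :=
    aux_selfadj_opNorm_le T hTadj (mul_nonneg (Real.sqrt_nonneg 2) hw0) hTub
  have hSsq : ‖S‖^2 ≤ 2 * w^2 := by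
    nlinarith [norm_nonneg S, mul_nonneg (Real.sqrt_nonneg 2) hw0]
  have hTsq : ‖T‖^2 ≤ 2 * w^2 := by
    nlinarith [norm_nonneg T, mul_nonneg (Real.sqrt_nonneg 2) hw0]
  -- lower bounds from the hypothesis
  have hid := aux_op_identity A
  have hnorm4 : ‖S * S + T * T‖ = 4 * w^2 := by
    rw [hSdef, hTdef, hid]; rw [hwdef] at h ⊢; linarith
  have hsum : 4 * w^2 ≤ ‖S‖^2 + ‖T‖^2 := by
    have h4 : 4 * w^2 ≤ ‖S * S‖ + ‖T * T‖ := by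
      rw [← hnorm4]; exact norm_add_le _ _
    have h5 := norm_mul_le S S
    have h6 := norm_mul_le T T
    nlinarith
  have hTlow : 2 * w^2 ≤ ‖T‖^2 := by linarith
  have hSlow : 2 * w^2 ≤ ‖S‖^2 := by linarith
  -- existence of almost-null numerical values
  have hεS : ∀ ε : ℝ, 0 < ε → ∃ y : H, ‖y‖ = 1 ∧ ‖⟪S y, y⟫_ℂ‖ < ε := fun ε hε =>
    aux_exists_small S T hTadj x₀ hx₀ hST hTlow hε
  have hεT : ∀ ε : ℝ, 0 < ε → ∃ y : H, ‖y‖ = 1 ∧ ‖⟪T y, y⟫_ℂ‖ < ε := fun ε hε =>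
    aux_exists_small T S hSadj x₀ hx₀ hTS hSlow hε
  refine ⟨aux_crawford_zero S hεS, aux_crawford_zero T hεT, ?_⟩
  -- construction of the sequence
  have hseq : ∀ n : ℕ, ∃ y : H, ‖y‖ = 1 ∧ ‖⟪S y, y⟫_ℂ‖ < 1/((n:ℝ)+1) := fun n =>
    hεS _ (by positivity)
  choose y hy1 hy2 using hseq
  have hmem : ∀ n, ‖⟪reP A (y n), y n⟫_ℂ‖ ∈ Set.Icc (0:ℝ) ‖reP A‖ := by
    intro n
    refine ⟨norm_nonneg _, ?_⟩
    calc ‖⟪reP A (y n), y n⟫_ℂ‖ ≤ ‖reP A (y n)‖ * ‖y n‖ := norm_inner_le_norm _ _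
      _ ≤ (‖reP A‖ * ‖y n‖) * ‖y n‖ := by
          apply mul_le_mul_of_nonneg_right ((reP A).le_opNorm (y n)) (norm_nonneg _)
      _ = ‖reP A‖ := by rw [hy1]; ring
  obtain ⟨L, -, φ, hφ, hLconv⟩ := (isCompact_Icc).tendsto_subseq hmem
  refine ⟨y ∘ φ, fun n => hy1 (φ n), L, hLconv, ?_⟩
  -- the imaginary parts converge to the same limit
  have hS0 : Filter.Tendsto (fun n => ‖⟪S (y (φ n)), y (φ n)⟫_ℂ‖)
      Filter.atTop (nhds 0) := by
    apply squeeze_zero (fun n => norm_nonneg _) (fun n => (hy2 (φ n)).le)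
    apply squeeze_zero (g := fun n : ℕ => 1/((n:ℝ)+1)) (fun n => by positivity)
      (fun n => ?_) tendsto_one_div_add_atTop_nhds_zero_nat
    apply one_div_le_one_div_of_le (by positivity)
    have hn : n ≤ φ n := hφ.le_apply
    exact_mod_cast Nat.succ_le_succ hn
  apply Filter.Tendsto.congr_dist
    (f₁ := fun n => ‖⟪reP A (y (φ n)), y (φ n)⟫_ℂ‖) hLconv
  apply squeeze_zero (fun n => dist_nonneg) (fun n => ?_) hS0
  rw [Real.dist_eq]
  have hsplit : ⟪S (y (φ n)), y (φ n)⟫_ℂ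
      = ⟪reP A (y (φ n)), y (φ n)⟫_ℂ + ⟪imP A (y (φ n)), y (φ n)⟫_ℂ := by
    rw [hSdef, ContinuousLinearMap.add_apply, inner_add_left]
  have habs := abs_norm_sub_norm_le (⟪reP A (y (φ n)), y (φ n)⟫_ℂ)
    (-(⟪imP A (y (φ n)), y (φ n)⟫_ℂ))
  rw [norm_neg, sub_neg_eq_add, ← hsplit] at habs
  exact habs
end
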